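/- The common meadow of rationals is minimal: for every element a ∈ Option ℚ there is a closed meadow term t (a meadow term in 0 variables) whose evaluation in the common meadow enlargement of ℚ equals a. -/

import Mathlib

universe u

/-- Meadow terms in `n` variables: variables, constants `0`, `1`, `⊥`,
negation, addition, multiplication and division. -/
inductive MTerm (n : ℕ) : Type where
  | var : Fin n → MTerm n
  | zero : MTerm n
  | one : MTerm n
  | bot : MTerm n
  | neg : MTerm n → MTerm n
  | add : MTerm n → MTerm n → MTerm n
  | mul : MTerm n → MTerm n → MTerm n
  | div : MTerm n → MTerm n → MTerm n

namespace MTerm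

/-- Addition on the common meadow enlargement `Option F` of a field `F`. -/
def cmAdd {F : Type u} [Field F] : Option F → Option F → Option F
  | some a, some b => some (a + b)
  | _, _ => none

/-- Multiplication on the common meadow enlargement `Option F` of a field `F`. -/
def cmMul {F : Type u} [Field F] : Option F → Option F → Option F
  | some a, some b => some (a * b)
  | _, _ => none

/-- Negation on the common meadow enlargement `Option F` of a field `F`. -/
def cmNeg {F : Type u} [Field F] : Option F → Option F
  | some a => some (-a)
  | none => none

open Classical in
/-- Division on the common meadow enlargement `Option F` of a field `F`:
`x / y = ⊥` if `x = ⊥` or `y = ⊥` or `y = 0`, and `x / y = x * y⁻¹` otherwise. -/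
noncomputable def cmDiv {F : Type u} [Field F] : Option F → Option F → Option F
  | some a, some b => if b = 0 then none else some (a * b⁻¹)
  | _, _ => none

/-- Evaluation of a meadow term in the common meadow enlargement `Option F`
of a field `F`, under a valuation `σ : Fin n → Option F`. -/
noncomputable def eval {n : ℕ} {F : Type u} [Field F] (σ : Fin n → Option F) :
    MTerm n → Option F
  | var i => σ i
  | zero => some 0
  | one => some 1
  | bot => none
  | neg t => cmNeg (t.eval σ)
  | add t s => cmAdd (t.eval σ) (s.eval σ)
  | mul t s => cmMul (t.eval σ) (s.eval σ)
  | div t s => cmDiv (t.eval σ) (s.eval σ)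


end MTerm


open MTerm

def natT : ℕ → MTerm 0
  | 0 => .zero
  | n+1 => .add (natT n) .one

lemma natT_eval (n : ℕ) : (natT n).eval (Fin.elim0 : Fin 0 → Option ℚ) = some (n : ℚ) := by
  induction n with
  | zero => rfl
  | succ k ih => simp [natT, MTerm.eval, ih, cmAdd]

noncomputable def intT (z : ℤ) : MTerm 0 :=
  if z < 0 then .neg (natT z.natAbs) else natT z.natAbs

lemma intT_eval (z : ℤ) : (intT z).eval (Fin.elim0 : Fin 0 → Option ℚ) = some (z : ℚ) := by
  unfold intT
  split
  case isTrue h =>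
    simp [MTerm.eval, natT_eval, cmNeg]
    push_cast [Nat.cast_natAbs]
    rw [abs_of_neg (by exact_mod_cast h)]
    ring
  case isFalse h =>
    simp [MTerm.eval, natT_eval]
    push_cast [Nat.cast_natAbs]
    exact not_lt.mp h

open MTerm in
/-- The common meadow of rationals is minimal: every element of `Option ℚ` is the
value of a closed meadow term (a meadow term in `0` variables). -/
theorem commonMeadow_rat_minimal (a : Option ℚ) :
    ∃ t : MTerm 0, t.eval (Fin.elim0 : Fin 0 → Option ℚ) = a := by
  match a with
  | none => exact ⟨.bot, rfl⟩
  | some q =>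
    refine ⟨.div (intT q.num) (natT q.den), ?_⟩
    simp [MTerm.eval, intT_eval, natT_eval, cmDiv, q.den_ne_zero]
    have h := Rat.num_div_den q
    rw [div_eq_mul_inv] at h
    exact_mod_cast h
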